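/- (Core construction underlying the near-tightness of Theorem 2, cf. Proposition C.1: greedy planning with a β-accurate optimal-value oracle can lose β per step.) For every real β ≥ 0 and every integer H ≥ 1, there exist a nonempty finite state space S, a deterministic MDP (T, R) on S with action space A = Bool, a state s_0 ∈ S, a function V̂ : ℕ → S → ℝ with V*(h,s) ≥ V̂(h,s) ≥ V*(h,s) − β for all h ≤ H and all s ∈ S, and actions a_0, …, a_{H−1} ∈ A with s_{h+1} = T(s_h, a_h), such that each a_h attains the maximum over a ∈ A of R(s_h, a) + V̂(H−h−1, T(s_h, a)), and yet Σ_{h<H} R(s_h, a_h) ≤ V*(H, s_0) − β·H. Moreover the construction can be taken with nonnegative rewards, and if additionally β·H ≤ 1 it can be taken so that V*(h, s) ≤ 1 for all h ≤ H and all s ∈ S. -/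
import Mathlib


open scoped BigOperators

/-- The `h`-step value of a stationary deterministic policy `π` in the deterministic MDP
with transition function `T` and reward function `R`. -/
noncomputable def detVal {S A : Type*} (T : S → A → S) (R : S → A → ℝ)
    (π : S → A) : ℕ → S → ℝ
  | 0, _ => 0
  | h + 1, s => R s (π s) + detVal T R π h (T s (π s))

/-- The `h`-step optimal value in the deterministic MDP `(T, R)`. -/
noncomputable def detOptVal {S A : Type*} [Fintype A] [Nonempty A]
    (T : S → A → S) (R : S → A → ℝ) : ℕ → S → ℝ
  | 0, _ => 0
  | h + 1, s => ⨆ a : A, (R s a + detOptVal T R h (T s a))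

lemma detOptVal_construction (β : ℝ) (hβ : 0 ≤ β) :
    ∀ h : ℕ, ∀ x : Bool,
      detOptVal (fun (_ : Bool) (a : Bool) => a)
        (fun (_ : Bool) (a : Bool) => if a then β else 0) h x = β * h := by
  intro h
  induction h with
  | zero => intro x; simp [detOptVal]
  | succ n ih =>
    intro x
    rw [show ((n + 1 : ℕ) : ℝ) = (n : ℝ) + 1 by push_cast; ring]
    show (⨆ a : Bool, ((if a then β else 0) + detOptVal _ _ n a)) = β * (n + 1)
    have hval : ∀ a : Bool, ((if a then β else 0) + detOptVal
        (fun (_ : Bool) (a : Bool) => a)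
        (fun (_ : Bool) (a : Bool) => if a then β else 0) n a)
        = (if a then β else 0) + β * n := by
      intro a; rw [ih a]
    apply le_antisymm
    · apply ciSup_le
      intro b
      rw [hval b]
      cases b <;> simp <;> nlinarith
    · have hb : BddAbove (Set.range fun a : Bool =>
          ((if a then β else 0) + detOptVal (fun (_ : Bool) (a : Bool) => a)
            (fun (_ : Bool) (a : Bool) => if a then β else 0) n a)) :=
        Set.Finite.bddAbove (Set.finite_range _)
      have := le_ciSup hb true
      rw [hval true] at this
      simp at this ⊢
      linarith

/-- **Core construction underlying the near-tightness of Theorem 2 (cf. Proposition C.1):**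
greedy planning with a `β`-accurate optimal-value oracle can lose `β` at every step.
For every `β ≥ 0` and `H ≥ 1` there is a deterministic MDP with boolean actions and
nonnegative rewards, a `β`-accurate optimal-value oracle `V̂`, and a greedy path w.r.t.
`V̂` whose cumulative reward falls short of the optimal value `V*(H, s_0)` by `β·H`;
moreover if `β·H ≤ 1` the construction also has all optimal values at most `1`. -/
theorem greedy_with_beta_oracle_loses_beta_per_step
    (β : ℝ) (hβ : 0 ≤ β) (H : ℕ) (hH : 1 ≤ H) :
    ∃ (S : Type) (_ : Fintype S) (_ : Nonempty S)
      (T : S → Bool → S) (R : S → Bool → ℝ) (s0 : S)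
      (Vhat : ℕ → S → ℝ) (s : ℕ → S) (a : ℕ → Bool),
      (∀ x : S, ∀ b : Bool, 0 ≤ R x b) ∧
      (∀ h : ℕ, h ≤ H → ∀ x : S,
        Vhat h x ≤ detOptVal T R h x ∧ detOptVal T R h x - β ≤ Vhat h x) ∧
      s 0 = s0 ∧
      (∀ h : ℕ, h < H → s (h + 1) = T (s h) (a h)) ∧
      (∀ h : ℕ, h < H → ∀ b : Bool,
        R (s h) b + Vhat (H - h - 1) (T (s h) b) ≤
          R (s h) (a h) + Vhat (H - h - 1) (T (s h) (a h))) ∧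
      (∑ h ∈ Finset.range H, R (s h) (a h)) ≤ detOptVal T R H s0 - β * H ∧
      (β * H ≤ 1 → ∀ h : ℕ, h ≤ H → ∀ x : S, detOptVal T R h x ≤ 1) := by
  refine ⟨Bool, inferInstance, inferInstance,
    (fun _ a => a), (fun _ a => if a then β else 0), false,
    (fun h x => β * h - (if x then β else 0)), (fun _ => false), (fun _ => false),
    ?_, ?_, rfl, ?_, ?_, ?_, ?_⟩
  · intro x b; cases b <;> simp [hβ]
  · intro h _ x
    rw [detOptVal_construction β hβ h x]
    cases x <;> simp <;> nlinarith [mul_nonneg hβ (Nat.cast_nonneg h : (0:ℝ) ≤ h)]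
  · intro h _; rfl
  · intro h _ b; cases b <;> simp
  · rw [detOptVal_construction β hβ H false]
    simp
  · intro hβH h hh x
    rw [detOptVal_construction β hβ h x]
    calc β * h ≤ β * H := by
          apply mul_le_mul_of_nonneg_left _ hβ
          exact_mod_cast hh
      _ ≤ 1 := hβH
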